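/- Let K be a perfect field with char K ≠ 2, (V, σ) a 2n-dimensional symplectic K-vector space, and f : V → V a self-adjoint operator. Then there exist an n-dimensional subspace U of V, an identification Φ of the symplectic space (U × U*, ω) with (V, σ) (where ω((v,λ),(w,μ)) = λ(w) − μ(v)), and a linear map l : U → U such that Φ ∘ (l, l*) = f ∘ Φ; i.e., f is symplectically conjugate to the operator (v,λ) ↦ (l(v), l*(λ)). -/

import Mathlib

/-- The canonical symplectic form on `U × U*`: `ω((v,λ),(w,μ)) = λ(w) − μ(v)`. -/
def omegaForm (K U : Type*) [Field K] [AddCommGroup U] [Module K U] :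
    LinearMap.BilinForm K (U × Module.Dual K U) :=
  LinearMap.mk₂ K (fun p q => p.2 q.1 - q.2 p.1)
    (by intro m₁ m₂ n; simp [map_add]; ring)
    (by intro c m n; simp [map_smul, smul_eq_mul]; ring)
    (by intro m n₁ n₂; simp [map_add]; ring)
    (by intro c m n; simp [map_smul, smul_eq_mul]; ring)

/-- A Darboux basis: `σ(uᵢ,uⱼ)=0`, `σ(wᵢ,wⱼ)=0`, `σ(wᵢ,uⱼ)=δᵢⱼ`, where
`uᵢ = b (Sum.inl i)` and `wᵢ = b (Sum.inr i)`. -/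
def IsDarbouxBasis {K V : Type*} [Field K] [AddCommGroup V] [Module K V] {n : ℕ}
    (σ : LinearMap.BilinForm K V) (b : Module.Basis (Fin n ⊕ Fin n) K V) : Prop :=
  (∀ i j, σ (b (Sum.inl i)) (b (Sum.inl j)) = 0) ∧
  (∀ i j, σ (b (Sum.inr i)) (b (Sum.inr j)) = 0) ∧
  (∀ i j, σ (b (Sum.inr i)) (b (Sum.inl j)) = if i = j then 1 else 0)

set_option linter.unusedSectionVars false
set_option maxHeartbeats 1000000

open Module Submodule

section Aux

/-- Triangular system lemma. -/
lemma lemZ {K : Type*} [Field K] {d : ℕ} (h : ℕ → K)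
    (hh : ∀ k, k < d → h k = if k = d - 1 then 1 else 0)
    (a : Fin d → K) (ha : ∀ i, i < d → ∑ j : Fin d, a j * h (i + j) = 0) :
    ∀ j, a j = 0 := by
  suffices H : ∀ t (j : Fin d), d - 1 - (j : ℕ) < t → a j = 0 by
    intro j
    exact H d j (by have := j.isLt; omega)
  intro t
  induction t with
  | zero => intro j hj; omega
  | succ t iht =>
    intro j hj
    have hjd : (j : ℕ) < d := j.isLt
    have h0 := ha (d - 1 - (j : ℕ)) (by omega)
    rw [Finset.sum_eq_single j] at h0
    · rw [show d - 1 - (j : ℕ) + (j : ℕ) = d - 1 by omega, hh (d - 1) (by omega)] at h0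
      simpa using h0
    · intro b _ hbj
      rcases lt_or_gt_of_ne (fun hc : (b : ℕ) = (j : ℕ) => hbj (Fin.ext hc)) with hlt | hgt
      · rw [hh (d - 1 - (j : ℕ) + (b : ℕ)) (by omega), if_neg (by omega), mul_zero]
      · rw [iht b (by have := b.isLt; omega), zero_mul]
    · intro hmem; exact absurd (Finset.mem_univ j) hmem


variable {K V : Type*} [Field K] [AddCommGroup V] [Module K V]





lemma range_fin_eq_image (f : Module.End K V) (v : V) (N : ℕ) :
    Set.range (fun i : Fin N => (f ^ (i : ℕ)) v) = (fun k => (f ^ k) v) '' Set.Iio N := by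
  ext x
  constructor
  · rintro ⟨i, rfl⟩; exact ⟨i, i.isLt, rfl⟩
  · rintro ⟨k, hk, rfl⟩; exact ⟨⟨k, hk⟩, rfl⟩

lemma cyc_step (f : Module.End K V) (v : V) (n : ℕ)
    (h : (f ^ n) v ∈ span K ((fun k => (f ^ k) v) '' Set.Iio n)) :
    ∀ k, (f ^ k) v ∈ span K ((fun k => (f ^ k) v) '' Set.Iio n) := by
  set g : ℕ → V := fun k => (f ^ k) v with hg
  set S := span K (g '' Set.Iio n) with hS
  have hmap : ∀ x ∈ S, f x ∈ S := by
    intro x hx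
    have : f x ∈ Submodule.map f S := Submodule.mem_map_of_mem hx
    rw [hS, Submodule.map_span] at this
    refine span_le.mpr ?_ this
    rintro y ⟨z, ⟨k, hk, rfl⟩, rfl⟩
    rw [Set.mem_Iio] at hk
    have : f (g k) = g (k + 1) := by
      simp only [hg, pow_succ']
      rfl
    rw [this]
    rcases Nat.lt_or_ge (k + 1) n with h1 | h1
    · exact subset_span ⟨k + 1, h1, rfl⟩
    · have : k + 1 = n := by omega
      rw [this]; exact h
  intro k
  induction k with
  | zero =>
    rcases Nat.eq_zero_or_pos n with rfl | hn
    · exact h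
    · exact subset_span ⟨0, hn, rfl⟩
  | succ m ihm =>
    have : (f ^ (m + 1)) v = f ((f ^ m) v) := by rw [pow_succ']; rfl
    rw [this]
    exact hmap _ ihm

lemma cyc_indep (f : Module.End K V) (v : V) (N : ℕ)
    (hN : ∀ n, n < N → (f ^ n) v ∉ span K ((fun k => (f ^ k) v) '' Set.Iio n)) :
    LinearIndependent K (fun i : Fin N => (f ^ (i : ℕ)) v) := by
  induction N with
  | zero => exact linearIndependent_empty_type
  | succ N ihN =>
    have heq : (fun i : Fin (N + 1) => (f ^ (i : ℕ)) v)
        = Fin.snoc (fun i : Fin N => (f ^ (i : ℕ)) v) ((f ^ N) v) := by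
      funext i
      refine Fin.lastCases ?_ ?_ i
      · simp
      · intro j; simp
    rw [heq, linearIndependent_fin_snoc]
    refine ⟨ihN (fun n hn => hN n (by omega)), ?_⟩
    rw [range_fin_eq_image]
    exact hN N (by omega)

lemma cyc_exists (f : Module.End K V) (v : V) [FiniteDimensional K V] :
    ∃ n, (f ^ n) v ∈ span K ((fun k => (f ^ k) v) '' Set.Iio n) ∧ n ≤ finrank K V := by
  by_contra hcon
  push_neg at hcon
  have hall : ∀ n, n < finrank K V + 1 →
      (f ^ n) v ∉ span K ((fun k => (f ^ k) v) '' Set.Iio n) := by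
    intro n hn hmem
    exact absurd (hcon n hmem) (by omega)
  have := (cyc_indep f v (finrank K V + 1) hall).fintype_card_le_finrank
  simp at this

noncomputable def cycDeg (f : Module.End K V) (v : V) [FiniteDimensional K V] : ℕ :=
  sInf {n | (f ^ n) v ∈ span K ((fun k => (f ^ k) v) '' Set.Iio n)}

variable [FiniteDimensional K V]

lemma cycDeg_spec (f : Module.End K V) (v : V) :
    (f ^ cycDeg f v) v ∈ span K ((fun k => (f ^ k) v) '' Set.Iio (cycDeg f v)) :=
by
  have h : {n | (f ^ n) v ∈ span K ((fun k => (f ^ k) v) '' Set.Iio n)}.Nonempty :=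
    ⟨(cyc_exists f v).choose, (cyc_exists f v).choose_spec.1⟩
  exact Nat.sInf_mem h

lemma cycDeg_min (f : Module.End K V) (v : V) :
    ∀ k, k < cycDeg f v → (f ^ k) v ∉ span K ((fun k => (f ^ k) v) '' Set.Iio k) :=
  fun _ hk => Nat.notMem_of_lt_sInf hk

lemma cycDeg_le_finrank (f : Module.End K V) (v : V) : cycDeg f v ≤ finrank K V :=
  le_trans (Nat.sInf_le (cyc_exists f v).choose_spec.1) (cyc_exists f v).choose_spec.2

lemma cycDeg_indep (f : Module.End K V) (v : V) :
    LinearIndependent K (fun i : Fin (cycDeg f v) => (f ^ (i : ℕ)) v) :=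
  cyc_indep f v _ (cycDeg_min f v)

lemma cycDeg_span (f : Module.End K V) (v : V) :
    span K (Set.range (fun i : Fin (cycDeg f v) => (f ^ (i : ℕ)) v))
      = span K (Set.range (fun k : ℕ => (f ^ k) v)) := by
  rw [range_fin_eq_image]
  apply le_antisymm
  · exact span_mono (Set.image_subset_range _ _)
  · rw [span_le]
    rintro x ⟨k, rfl⟩
    exact cyc_step f v _ (cycDeg_spec f v) k

lemma cyc_invariant (f : Module.End K V) (v : V) (x : V)
    (hx : x ∈ span K (Set.range (fun k : ℕ => (f ^ k) v))) :
    f x ∈ span K (Set.range (fun k : ℕ => (f ^ k) v)) := by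
  have : f x ∈ Submodule.map f (span K (Set.range (fun k : ℕ => (f ^ k) v))) :=
    Submodule.mem_map_of_mem hx
  rw [Submodule.map_span] at this
  refine span_le.mpr ?_ this
  rintro y ⟨z, ⟨k, rfl⟩, rfl⟩
  have : f ((f ^ k) v) = (f ^ (k + 1)) v := by rw [pow_succ']; rfl
  rw [this]
  exact subset_span ⟨k + 1, rfl⟩


lemma skew_of_alt (σ : LinearMap.BilinForm K V) (halt : ∀ v, σ v v = 0) :
    ∀ x y, σ x y = -σ y x := by
  intro x y
  have h := halt (x + y)
  simp only [map_add, LinearMap.add_apply, halt x, halt y] at h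
  linear_combination h

lemma sa_pow (σ : LinearMap.BilinForm K V) (f : Module.End K V)
    (hsa : ∀ v w, σ v (f w) = σ (f v) w) :
    ∀ (j : ℕ) (x y : V), σ x ((f ^ j) y) = σ ((f ^ j) x) y := by
  intro j
  induction j with
  | zero => intro x y; simp
  | succ m ih =>
    intro x y
    have h1 : (f ^ (m + 1)) y = f ((f ^ m) y) := by rw [pow_succ']; rfl
    have h2 : (f ^ (m + 1)) x = (f ^ m) (f x) := by rw [pow_succ]; rfl
    rw [h1, h2, hsa, ih]

lemma cyc_isotropic (σ : LinearMap.BilinForm K V) (halt : ∀ v, σ v v = 0)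
    (hchar : (2 : K) ≠ 0) (f : Module.End K V)
    (hsa : ∀ v w, σ v (f w) = σ (f v) w) (v : V) :
    ∀ x ∈ span K (Set.range (fun k : ℕ => (f ^ k) v)),
    ∀ y ∈ span K (Set.range (fun k : ℕ => (f ^ k) v)), σ x y = 0 := by
  have hcomp : ∀ j k : ℕ, (f ^ j) ((f ^ k) v) = (f ^ (j + k)) v := by
    intro j k; rw [pow_add]; rfl
  have hjk : ∀ j k : ℕ, σ ((f ^ j) v) ((f ^ k) v) = 0 := by
    have e1 : ∀ j k : ℕ, σ ((f ^ j) v) ((f ^ k) v) = σ v ((f ^ (j + k)) v) := by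
      intro j k
      rw [← sa_pow σ f hsa j v ((f ^ k) v), hcomp]
    intro j k
    have h2 : σ ((f ^ j) v) ((f ^ k) v) = -σ ((f ^ j) v) ((f ^ k) v) := by
      conv_lhs => rw [skew_of_alt σ halt]
      rw [e1 k j, e1 j k, add_comm k j]
    have h3 : (2 : K) * σ ((f ^ j) v) ((f ^ k) v) = 0 := by linear_combination h2
    exact (mul_eq_zero.mp h3).resolve_left hchar
  intro x hx y hy
  have step1 : ∀ k : ℕ, σ x ((f ^ k) v) = 0 := by
    intro k
    have hsub : Set.range (fun j : ℕ => (f ^ j) v)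
        ⊆ (LinearMap.ker (σ.flip ((f ^ k) v)) : Set V) := by
      rintro z ⟨j, rfl⟩
      simp only [SetLike.mem_coe, LinearMap.mem_ker, LinearMap.flip_apply]
      exact hjk j k
    have := (span_le.mpr hsub) hx
    simpa [LinearMap.flip_apply] using this
  have hsub2 : Set.range (fun k : ℕ => (f ^ k) v) ⊆ (LinearMap.ker (σ x) : Set V) := by
    rintro z ⟨k, rfl⟩
    exact step1 k
  exact (span_le.mpr hsub2) hy

lemma cycDeg_zero (f : Module.End K V) [FiniteDimensional K V] : cycDeg f (0 : V) = 0 :=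
  Nat.eq_zero_of_le_zero (Nat.sInf_le (by simp))

end Aux

universe u v

lemma key {K : Type u} [Field K] (hchar : (2 : K) ≠ 0) :
    ∀ (m : ℕ) (V : Type v) [AddCommGroup V] [Module K V] [FiniteDimensional K V]
      (σ : LinearMap.BilinForm K V), (∀ v, σ v v = 0) → σ.Nondegenerate →
      ∀ f : Module.End K V, (∀ v w, σ v (f w) = σ (f v) w) → Module.finrank K V ≤ m →
      ∃ L L' : Submodule K V, IsCompl L L' ∧ (∀ x ∈ L, f x ∈ L) ∧ (∀ x ∈ L', f x ∈ L') ∧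
        (∀ x ∈ L, ∀ y ∈ L, σ x y = 0) ∧ (∀ x ∈ L', ∀ y ∈ L', σ x y = 0) := by
  intro m
  induction m with
  | zero =>
    intro V _ _ _ σ halt hnd f hsa hrank
    have h0 : Module.finrank K V = 0 := Nat.le_zero.mp hrank
    have hsub : Subsingleton V := Module.finrank_zero_iff.mp h0
    refine ⟨⊥, ⊤, isCompl_bot_top, ?_, ?_, ?_, ?_⟩
    · intro x hx; simp_all
    · intro x _; trivial
    · intro x hx; simp_all
    · intro x _ y _
      rw [Subsingleton.elim x 0]; simp
  | succ m ih =>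
    intro V _ _ _ σ halt hnd f hsa hrank
    classical
    by_cases h0 : Module.finrank K V = 0
    · have hsub : Subsingleton V := Module.finrank_zero_iff.mp h0
      refine ⟨⊥, ⊤, isCompl_bot_top, ?_, ?_, ?_, ?_⟩
      · intro x hx; simp_all
      · intro x _; trivial
      · intro x hx; simp_all
      · intro x _ y _
        rw [Subsingleton.elim x 0]; simp
    have hskew := skew_of_alt σ halt
    have hnt : Nontrivial V := Module.finrank_pos_iff.mp (Nat.pos_of_ne_zero h0)
    obtain ⟨u, hu⟩ := exists_ne (0 : V)
    -- pick v of maximal cyclic degree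
    obtain ⟨v, hvmax⟩ : ∃ v : V, ∀ w : V, cycDeg f w ≤ cycDeg f v := by
      obtain ⟨v, hv⟩ : ∃ w : V, cycDeg f w = Nat.findGreatest
          (fun k => ∃ w : V, cycDeg f w = k) (Module.finrank K V) :=
        Nat.findGreatest_spec (P := fun k => ∃ w : V, cycDeg f w = k)
          (cycDeg_le_finrank f u) ⟨u, rfl⟩
      refine ⟨v, fun w => ?_⟩
      rw [hv]
      exact Nat.le_findGreatest (cycDeg_le_finrank f w) ⟨w, rfl⟩
    set d := cycDeg f v with hd
    have hcyc0 : ∀ w : V, w ≠ 0 → 1 ≤ cycDeg f w := by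
      intro w hw
      by_contra hcon
      have hzero : cycDeg f w = 0 := by omega
      have hspec := cycDeg_spec f w
      have hIio : Set.Iio (0 : ℕ) = ∅ := by ext k; simp
      rw [hzero, hIio] at hspec
      simp only [Set.image_empty, Submodule.span_empty, Submodule.mem_bot, pow_zero,
        Module.End.one_apply] at hspec
      exact hw hspec
    have hd1 : 1 ≤ d := le_trans (hcyc0 u hu) (hvmax u)
    have hvne : v ≠ 0 := by
      intro hv0
      rw [hd, hv0, cycDeg_zero] at hd1; omega
    set g : ℕ → V := fun k => (f ^ k) v with hg
    set C := span K (Set.range fun i : Fin d => g i) with hC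
    have hindep : LinearIndependent K (fun i : Fin d => g i) := cycDeg_indep f v
    have hCspan : C = span K (Set.range g) := cycDeg_span f v
    have hCinv : ∀ x ∈ C, f x ∈ C := by
      rw [hCspan]; exact cyc_invariant f v
    have hCiso : ∀ x ∈ C, ∀ y ∈ C, σ x y = 0 := by
      rw [hCspan]; exact cyc_isotropic σ halt hchar f hsa v
    have hmemC : ∀ k, k < d → g k ∈ C := fun k hk => subset_span ⟨⟨k, hk⟩, rfl⟩
    -- dual functional
    set basisC := Basis.span hindep with hbasisC
    set i₀ : Fin d := ⟨d - 1, by omega⟩ with hi₀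
    obtain ⟨φ, hφ⟩ := (basisC.coord i₀).exists_extend
    have hφg : ∀ k, k < d → φ (g k) = if k = d - 1 then 1 else 0 := by
      intro k hk
      have hgmem : g k ∈ C := hmemC k hk
      have h1 : (⟨g k, hgmem⟩ : C) = basisC ⟨k, hk⟩ :=
        (Basis.span_apply hindep ⟨k, hk⟩).symm
      have h2 : φ (g k) = basisC.coord i₀ ⟨g k, hgmem⟩ := by
        rw [← hφ]; rfl
      rw [h2, h1, Basis.coord_apply, Basis.repr_self, Finsupp.single_apply]
      by_cases hkd : k = d - 1 <;> simp [hi₀, Fin.ext_iff, hkd]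
    set w := (σ.toDual hnd).symm (-φ) with hwdef
    have hσw : ∀ x, σ w x = -φ x := by
      intro x
      have h1 : σ.toDual hnd w = -φ := LinearEquiv.apply_symm_apply _ _
      have h2 : σ w x = σ.toDual hnd w x := rfl
      rw [h2, h1]; rfl
    set h : ℕ → K := fun k => σ (g k) w with hhdef
    have hhval : ∀ k, k < d → h k = if k = d - 1 then 1 else 0 := by
      intro k hk
      have h1 : h k = -σ w (g k) := hskew _ _
      rw [h1, hσw, neg_neg, hφg k hk]
    set g' : ℕ → V := fun k => (f ^ k) w with hg'
    have hpair : ∀ i j : ℕ, σ (g i) (g' j) = h (i + j) := by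
      intro i j
      have h1 : σ (g i) ((f ^ j) w) = σ ((f ^ j) (g i)) w := sa_pow σ f hsa j (g i) w
      have h2 : (f ^ j) (g i) = g (i + j) := by
        simp only [hg]
        rw [add_comm i j, pow_add]; rfl
      rw [hg'] at *
      simp only at h1 ⊢
      rw [h1, h2]
    have hindep' : LinearIndependent K (fun j : Fin d => g' j) := by
      rw [Fintype.linearIndependent_iff]
      intro a hsum
      apply lemZ h hhval a
      intro i hi
      have h3 : σ (g i) (∑ j : Fin d, a j • g' j) = 0 := by rw [hsum, map_zero]
      rw [map_sum] at h3
      simpa [smul_eq_mul, hpair] using h3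
    set C' := span K (Set.range fun j : Fin d => g' j) with hC'
    have hC'span : C' = span K (Set.range g') := by
      apply le_antisymm
      · apply span_mono; rintro x ⟨j, rfl⟩; exact ⟨j, rfl⟩
      · rw [← cycDeg_span f w]
        apply span_mono
        rintro x ⟨i, rfl⟩
        exact ⟨⟨i, lt_of_lt_of_le i.isLt (hvmax w)⟩, rfl⟩
    have hC'inv : ∀ x ∈ C', f x ∈ C' := by
      rw [hC'span]; exact cyc_invariant f w
    have hC'iso : ∀ x ∈ C', ∀ y ∈ C', σ x y = 0 := by
      rw [hC'span]; exact cyc_isotropic σ halt hchar f hsa w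
    have hmemC' : ∀ k, k < d → g' k ∈ C' := fun k hk => subset_span ⟨⟨k, hk⟩, rfl⟩
    set W := C ⊔ C' with hW
    -- W is nondegenerate
    have hWnd : ∀ x ∈ W, (∀ y ∈ W, σ x y = 0) → x = 0 := by
      intro x hx hxy
      obtain ⟨c, hc, c', hc', rfl⟩ := mem_sup.mp hx
      obtain ⟨a, ha⟩ := (mem_span_range_iff_exists_fun K).mp hc
      obtain ⟨b, hb⟩ := (mem_span_range_iff_exists_fun K).mp hc'
      have ha0 : ∀ i, a i = 0 := by
        apply lemZ h hhval
        intro i hi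
        have h4 : σ (c + c') (g' i) = 0 := hxy _ (mem_sup_right (hmemC' i hi))
        rw [map_add, LinearMap.add_apply] at h4
        have h5 : σ c' (g' i) = 0 := hC'iso c' hc' (g' i) (hmemC' i hi)
        have h6 : σ c (g' i) = ∑ j : Fin d, a j * h (i + (j : ℕ)) := by
          rw [← ha, map_sum, LinearMap.sum_apply]
          simp [smul_eq_mul, hpair, add_comm]
        rw [h5, add_zero, h6] at h4
        exact h4
      have hc0 : c = 0 := by
        rw [← ha]
        simp [ha0]
      have hb0 : ∀ j, b j = 0 := by
        apply lemZ h hhval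
        intro i hi
        have h4 : σ (c + c') (g i) = 0 := hxy _ (mem_sup_left (hmemC i hi))
        have h4' : σ (g i) (c + c') = 0 := by
          rw [hskew, h4, neg_zero]
        rw [hc0, zero_add, ← hb, map_sum] at h4'
        simpa [smul_eq_mul, hpair] using h4'
      rw [hc0, ← hb]
      simp [hb0]
    have hdisjCC' : ∀ x, x ∈ C → x ∈ C' → x = 0 := by
      intro x hx1 hx2
      apply hWnd x (mem_sup_left hx1)
      intro y hy
      obtain ⟨yc, hyc, yc', hyc', rfl⟩ := mem_sup.mp hy
      rw [map_add]
      rw [hCiso x hx1 yc hyc, hC'iso x hx2 yc' hyc', add_zero]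
    have hrefl : σ.IsRefl := by
      intro x y hxy
      rw [hskew, hxy, neg_zero]
    have hWrest : (σ.restrict W).Nondegenerate := by
      refine LinearMap.BilinForm.Nondegenerate.ofSeparatingLeft ?_
      rintro ⟨x, hx⟩ hall
      apply Subtype.ext
      apply hWnd x hx
      intro y hy
      exact hall ⟨y, hy⟩
    have hcompl : IsCompl W (σ.orthogonal W) :=
      LinearMap.BilinForm.isCompl_orthogonal_of_restrict_nondegenerate hrefl hWrest
    set O := σ.orthogonal W with hO
    have hOmem : ∀ x, x ∈ O ↔ ∀ y ∈ W, σ y x = 0 := fun x => Iff.rfl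
    have hWinv : ∀ y ∈ W, f y ∈ W := by
      intro y hy
      obtain ⟨c, hc, c', hc', rfl⟩ := mem_sup.mp hy
      rw [map_add]
      exact add_mem (mem_sup_left (hCinv c hc)) (mem_sup_right (hC'inv c' hc'))
    have hOinv : ∀ x ∈ O, f x ∈ O := by
      intro x hx
      rw [hOmem]
      intro y hy
      exact (hsa y x).trans ((hOmem x).mp hx (f y) (hWinv y hy))
    have haltO : ∀ x : O, σ.restrict O x x = 0 := fun x => halt x
    have hndO : (σ.restrict O).Nondegenerate := by
      refine LinearMap.BilinForm.Nondegenerate.ofSeparatingLeft ?_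
      rintro ⟨x, hx⟩ hall
      apply Subtype.ext
      apply hnd.1 x
      intro y
      have hy : y ∈ W ⊔ O := by
        rw [hcompl.codisjoint.eq_top]; trivial
      obtain ⟨yw, hyw, yo, hyo, rfl⟩ := mem_sup.mp hy
      rw [map_add]
      have h1 : σ x yw = 0 := by
        rw [hskew, (hOmem x).mp hx yw hyw, neg_zero]
      have h2 : σ x yo = 0 := hall ⟨yo, hyo⟩
      rw [h1, h2, add_zero]
    set fO := f.restrict hOinv with hfO
    have hsaO : ∀ x y : O, σ.restrict O x (fO y) = σ.restrict O (fO x) y := by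
      intro x y
      have : σ (x : V) (f y) = σ (f x) y := hsa x y
      exact this
    have hvW : v ∈ W := by
      have : g 0 = v := by simp [hg]
      exact mem_sup_left (this ▸ hmemC 0 hd1)
    have hWpos : 0 < finrank K W := by
      have hnt : Nontrivial W := ⟨⟨⟨v, hvW⟩, 0, by simp [Subtype.ext_iff, hvne]⟩⟩
      exact finrank_pos
    have hOrank : finrank K O ≤ m := by
      have hsum := Submodule.finrank_add_eq_of_isCompl hcompl
      omega
    obtain ⟨L₀, L₀', hcompl₀, hL₀inv, hL₀'inv, hL₀iso, hL₀'iso⟩ :=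
      ih O (σ.restrict O) haltO hndO fO hsaO hOrank
    refine ⟨C ⊔ Submodule.map O.subtype L₀, C' ⊔ Submodule.map O.subtype L₀', ?_, ?_, ?_, ?_, ?_⟩
    · constructor
      · -- disjoint
        rw [disjoint_def]
        intro x hxL hxL'
        obtain ⟨c, hc, a, ha, hEq⟩ := mem_sup.mp hxL
        obtain ⟨c'', hc'', a', ha', hEq'⟩ := mem_sup.mp hxL'
        have hEq2 : c + a = c'' + a' := by rw [hEq, hEq']
        have h1 : c - c'' = a' - a := by
          rw [sub_eq_sub_iff_add_eq_add, hEq2, add_comm]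
        have hWm : c - c'' ∈ W := sub_mem (mem_sup_left hc) (mem_sup_right hc'')
        have hOm : a' - a ∈ O :=
          sub_mem (Submodule.map_subtype_le O L₀' ha') (Submodule.map_subtype_le O L₀ ha)
        have h2 : c - c'' = 0 :=
          (Submodule.disjoint_def.mp hcompl.disjoint) _ hWm (h1 ▸ hOm)
        have hcc : c = c'' := by
          rwa [sub_eq_zero] at h2
        have haa : a' = a := by
          have h3 : a' - a = 0 := h1 ▸ h2
          rw [sub_eq_zero] at h3
          exact h3
        have hc0 : c = 0 := hdisjCC' c hc (hcc ▸ hc'')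
        obtain ⟨b, hb, hba⟩ := ha
        obtain ⟨b', hb', hba'⟩ := ha'
        have hbb : b = b' := by
          apply Subtype.ext
          have : (b : V) = a := hba
          have h5 : (b' : V) = a' := hba'
          rw [this, h5, haa]
        have hbbot : b ∈ L₀ ⊓ L₀' := ⟨hb, hbb ▸ hb'⟩
        rw [hcompl₀.inf_eq_bot] at hbbot
        have ha0 : a = 0 := by
          rw [← hba, hbbot]; rfl
        rw [← hEq, hc0, ha0, add_zero]
      · -- codisjoint
        rw [codisjoint_iff]
        rw [sup_sup_sup_comm, ← Submodule.map_sup, hcompl₀.sup_eq_top, Submodule.map_top,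
          Submodule.range_subtype]
        exact hcompl.codisjoint.eq_top
    · -- f-invariance of L
      intro x hx
      obtain ⟨c, hc, a, ha, rfl⟩ := mem_sup.mp hx
      rw [map_add]
      apply add_mem (mem_sup_left (hCinv c hc))
      apply mem_sup_right
      obtain ⟨b, hb, rfl⟩ := ha
      exact ⟨fO b, hL₀inv b hb, (LinearMap.restrict_coe_apply f hOinv b).symm ▸ rfl⟩
    · -- f-invariance of L'
      intro x hx
      obtain ⟨c, hc, a, ha, rfl⟩ := mem_sup.mp hx
      rw [map_add]
      apply add_mem (mem_sup_left (hC'inv c hc))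
      apply mem_sup_right
      obtain ⟨b, hb, rfl⟩ := ha
      exact ⟨fO b, hL₀'inv b hb, (LinearMap.restrict_coe_apply f hOinv b).symm ▸ rfl⟩
    · -- isotropy of L
      intro x hx y hy
      obtain ⟨c, hc, a, ha, rfl⟩ := mem_sup.mp hx
      obtain ⟨c'', hc'', a', ha', rfl⟩ := mem_sup.mp hy
      have haO : a ∈ O := Submodule.map_subtype_le O L₀ ha
      have ha'O : a' ∈ O := Submodule.map_subtype_le O L₀ ha'
      simp only [map_add, LinearMap.add_apply]
      have h1 : σ c c'' = 0 := hCiso c hc c'' hc''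
      have h2 : σ c a' = 0 := (hOmem a').mp ha'O c (mem_sup_left hc)
      have h3 : σ a c'' = 0 := by
        rw [hskew, (hOmem a).mp haO c'' (mem_sup_left hc''), neg_zero]
      have h4 : σ a a' = 0 := by
        obtain ⟨b, hb, rfl⟩ := ha
        obtain ⟨b', hb', rfl⟩ := ha'
        exact hL₀iso b hb b' hb'
      rw [h1, h2, h3, h4]; ring
    · -- isotropy of L' (marker)
      intro x hx y hy
      obtain ⟨c, hc, a, ha, rfl⟩ := mem_sup.mp hx
      obtain ⟨c'', hc'', a', ha', rfl⟩ := mem_sup.mp hy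
      have haO : a ∈ O := Submodule.map_subtype_le O L₀' ha
      have ha'O : a' ∈ O := Submodule.map_subtype_le O L₀' ha'
      simp only [map_add, LinearMap.add_apply]
      have h1 : σ c c'' = 0 := hC'iso c hc c'' hc''
      have h2 : σ c a' = 0 := (hOmem a').mp ha'O c (mem_sup_right hc)
      have h3 : σ a c'' = 0 := by
        rw [hskew, (hOmem a).mp haO c'' (mem_sup_right hc''), neg_zero]
      have h4 : σ a a' = 0 := by
        obtain ⟨b, hb, rfl⟩ := ha
        obtain ⟨b', hb', rfl⟩ := ha'
        exact hL₀'iso b hb b' hb'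
      rw [h1, h2, h3, h4]; ring

theorem symplectic_spectral_polarization'
    {K V : Type*} [Field K] [AddCommGroup V] [Module K V]
    [FiniteDimensional K V]
    (hchar : (2 : K) ≠ 0) (n : ℕ) (hn : 0 < n)
    (hdim : Module.finrank K V = 2 * n)
    (σ : LinearMap.BilinForm K V) (halt : ∀ v, σ v v = 0) (hnd : σ.Nondegenerate)
    (f : Module.End K V) (hsa : ∀ v w, σ v (f w) = σ (f v) w) :
    ∃ U : Submodule K V, Module.finrank K U = n ∧
      ∃ Φ : (U × Module.Dual K U) ≃ₗ[K] V,
        (∀ x y : U × Module.Dual K U, σ (Φ x) (Φ y) = omegaForm K U x y) ∧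
        ∃ l : U →ₗ[K] U,
          ∀ x : U × Module.Dual K U, Φ (l x.1, l.dualMap x.2) = f (Φ x) := by
  obtain ⟨L, L', hcompl, hLinv, hL'inv, hLiso, hL'iso⟩ :=
    key hchar (Module.finrank K V) V σ halt hnd f hsa le_rfl
  have hskew := skew_of_alt σ halt
  set gmap : ↥L' →ₗ[K] Module.Dual K ↥L :=
    L.subtype.dualMap ∘ₗ σ.domRestrict L' with hgmap
  have hgapp : ∀ (y : L') (x : L), gmap y x = σ ↑y ↑x := fun y x => rfl
  have hinj' : ∀ y : L', (∀ x : L, σ ↑y ↑x = 0) → y = 0 := by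
    intro y hy
    apply Subtype.ext
    apply hnd.1
    intro z
    have hz : z ∈ L ⊔ L' := by rw [hcompl.codisjoint.eq_top]; trivial
    obtain ⟨zl, hzl, zl', hzl', rfl⟩ := Submodule.mem_sup.mp hz
    have h1 : σ ↑y zl = 0 := hy ⟨zl, hzl⟩
    have h2 : σ ↑y zl' = 0 := hL'iso _ y.2 zl' hzl'
    rw [map_add, h1, h2, add_zero]
  have hinj2 : ∀ x : L, (∀ y : L', σ ↑x ↑y = 0) → x = 0 := by
    intro x hx
    apply Subtype.ext
    apply hnd.1
    intro z
    have hz : z ∈ L ⊔ L' := by rw [hcompl.codisjoint.eq_top]; trivial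
    obtain ⟨zl, hzl, zl', hzl', rfl⟩ := Submodule.mem_sup.mp hz
    have h1 : σ ↑x zl = 0 := hLiso _ x.2 zl hzl
    have h2 : σ ↑x zl' = 0 := hx ⟨zl', hzl'⟩
    rw [map_add, h1, h2, add_zero]
  have hginj : Function.Injective gmap := by
    rw [← LinearMap.ker_eq_bot]
    apply (Submodule.eq_bot_iff _).mpr
    intro y hy
    rw [LinearMap.mem_ker] at hy
    exact hinj' y (fun x => by rw [← hgapp, hy]; rfl)
  set gmap2 : ↥L →ₗ[K] Module.Dual K ↥L' :=
    L'.subtype.dualMap ∘ₗ σ.domRestrict L with hgmap2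
  have hginj2 : Function.Injective gmap2 := by
    rw [← LinearMap.ker_eq_bot]
    apply (Submodule.eq_bot_iff _).mpr
    intro x hx
    rw [LinearMap.mem_ker] at hx
    exact hinj2 x (fun y => by
      have : gmap2 x y = σ ↑x ↑y := rfl
      rw [← this, hx]; rfl)
  have hsum : Module.finrank K ↥L + Module.finrank K ↥L' = 2 * n := by
    rw [Submodule.finrank_add_eq_of_isCompl hcompl, hdim]
  have hle1 : Module.finrank K ↥L' ≤ Module.finrank K ↥L :=
    le_trans (LinearMap.finrank_le_finrank_of_injective hginj) (le_of_eq Subspace.dual_finrank_eq)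
  have hle2 : Module.finrank K ↥L ≤ Module.finrank K ↥L' :=
    le_trans (LinearMap.finrank_le_finrank_of_injective hginj2) (le_of_eq Subspace.dual_finrank_eq)
  have hrankL : Module.finrank K ↥L = n := by omega
  have hdimeq : Module.finrank K ↥L' = Module.finrank K (Module.Dual K ↥L) := by
    rw [Subspace.dual_finrank_eq]; omega
  have hbij : Function.Bijective gmap :=
    ⟨hginj, (LinearMap.injective_iff_surjective_of_finrank_eq_finrank hdimeq).mp hginj⟩
  set gE := LinearEquiv.ofBijective gmap hbij with hgE0
  set Φ := (((LinearEquiv.refl K ↥L).prodCongr gE.symm)).trans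
    (Submodule.prodEquivOfIsCompl L L' hcompl) with hΦ0
  have hΦapp : ∀ p : ↥L × Module.Dual K ↥L, Φ p = ↑p.1 + ↑(gE.symm p.2) := fun p => rfl
  have hgEapp : ∀ y : ↥L', gE y = gmap y := fun y => rfl
  have hgEsymm : ∀ (μ : Module.Dual K ↥L) (x : ↥L), σ ↑(gE.symm μ) ↑x = μ x := by
    intro μ x
    have h1 : gmap (gE.symm μ) = μ := gE.apply_symm_apply μ
    calc σ ↑(gE.symm μ) ↑x = gmap (gE.symm μ) x := rfl
    _ = μ x := by rw [h1]
  refine ⟨L, hrankL, Φ, ?_, ?_⟩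
  · intro x y
    rw [hΦapp, hΦapp]
    simp only [map_add, LinearMap.add_apply]
    have h1 : σ (x.1 : V) ↑y.1 = 0 := hLiso _ x.1.2 _ y.1.2
    have h2 : σ ((gE.symm x.2 : ↥L') : V) ↑(gE.symm y.2) = 0 :=
      hL'iso _ (gE.symm x.2).2 _ (gE.symm y.2).2
    have h3 : σ (x.1 : V) ↑(gE.symm y.2) = -(y.2 x.1) := by
      rw [hskew, hgEsymm]
    have h4 : σ ((gE.symm x.2 : ↥L') : V) ↑y.1 = x.2 y.1 := hgEsymm _ _
    rw [h1, h2, h3, h4]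
    show _ = omegaForm K ↥L x y
    simp only [omegaForm, LinearMap.mk₂_apply]
    ring
  · set l := f.restrict hLinv with hl
    set fL' := f.restrict hL'inv with hfL'
    have hcomm : ∀ a : ↥L', gmap (fL' a) = l.dualMap (gmap a) := by
      intro a
      ext x
      show σ ↑(fL' a) ↑x = gmap a (l x)
      have h1 : (fL' a : V) = f ↑a := LinearMap.restrict_coe_apply f hL'inv a
      have h2 : gmap a (l x) = σ ↑a ↑(l x) := rfl
      have h3 : (l x : V) = f ↑x := LinearMap.restrict_coe_apply f hLinv x
      rw [h1, h2, h3]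
      exact (hsa ↑a ↑x).symm
    have hsymmcomm : ∀ μ : Module.Dual K ↥L, gE.symm (l.dualMap μ) = fL' (gE.symm μ) := by
      intro μ
      apply gE.injective
      rw [gE.apply_symm_apply]
      exact ((hcomm (gE.symm μ)).trans
        (by rw [show gmap (gE.symm μ) = μ from gE.apply_symm_apply μ])).symm
    refine ⟨l, ?_⟩
    intro x
    rw [hΦapp, hΦapp, map_add, hsymmcomm]
    show (↑(l x.1) : V) + ↑(fL' (gE.symm x.2)) = f ↑x.1 + f ↑(gE.symm x.2)
    rw [LinearMap.restrict_coe_apply, LinearMap.restrict_coe_apply]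

theorem symplectic_spectral_polarization
    {K V : Type*} [Field K] [PerfectField K] [AddCommGroup V] [Module K V]
    [FiniteDimensional K V]
    (hchar : (2 : K) ≠ 0) (n : ℕ) (hn : 0 < n)
    (hdim : Module.finrank K V = 2 * n)
    (σ : LinearMap.BilinForm K V) (halt : ∀ v, σ v v = 0) (hnd : σ.Nondegenerate)
    (f : Module.End K V) (hsa : ∀ v w, σ v (f w) = σ (f v) w) :
    ∃ U : Submodule K V, Module.finrank K U = n ∧
      ∃ Φ : (U × Module.Dual K U) ≃ₗ[K] V,
        (∀ x y : U × Module.Dual K U, σ (Φ x) (Φ y) = omegaForm K U x y) ∧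
        ∃ l : U →ₗ[K] U,
          ∀ x : U × Module.Dual K U, Φ (l x.1, l.dualMap x.2) = f (Φ x) := by
  exact symplectic_spectral_polarization' hchar n hn hdim σ halt hnd f hsa
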